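/- An infinite word w is accepted by an NBW A if and only if the reduced split tree of A on w contains a left-recurring branch, i.e., an infinite branch that goes to a left child infinitely many times. -/

import Mathlib

/-- A nondeterministic Büchi automaton. -/
structure NBW (A Q : Type*) where
  init : Q
  trans : Q → A → Set Q
  acc : Set Q

def NBW.IsRun {A Q : Type*} (M : NBW A Q) (w : ℕ → A) (ρ : ℕ → Q) : Prop :=
  ρ 0 = M.init ∧ ∀ i, ρ (i + 1) ∈ M.trans (ρ i) (w i)

def NBW.Accepting {A Q : Type*} (M : NBW A Q) (ρ : ℕ → Q) : Prop :=
  ∃ q ∈ M.acc, ∀ N, ∃ i ≥ N, ρ i = q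

def NBW.Lang {A Q : Type*} (M : NBW A Q) : Set (ℕ → A) :=
  {w | ∃ ρ, M.IsRun w ρ ∧ M.Accepting ρ}

/-- One level of the reduced split tree, with parents: for each node `Qi` of the
slice (processed left to right, `seen` collecting states already placed to the
left), record the triple (parent, left (accepting) child, right (nonaccepting)
child), before deletion of empty nodes. -/
def expandTriples {A Q : Type*} (δ : Q → A → Set Q) (F : Set Q) (a : A) :
    List (Set Q) → Set Q → List (Set Q × Set Q × Set Q)
  | [], _ => []
  | Qi :: rest, seen =>
    (Qi, (((⋃ q ∈ Qi, δ q a) ∩ F) \ seen), ((⋃ q ∈ Qi, δ q a) \ F) \ seen) ::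
      expandTriples δ F a rest
        (seen ∪ ((((⋃ q ∈ Qi, δ q a) ∩ F) \ seen)) ∪ (((⋃ q ∈ Qi, δ q a) \ F) \ seen))

/-- The successor slice: children of all nodes, with empty nodes removed. -/
noncomputable def sliceSucc {A Q : Type*} (δ : Q → A → Set Q) (F : Set Q) (a : A)
    (s : List (Set Q)) : List (Set Q) :=
  ((expandTriples δ F a s ∅).flatMap fun tr => [tr.2.1, tr.2.2]).filter
    fun S => @decide S.Nonempty (Classical.propDecidable _)

/-- The slices (levels) of the reduced split tree of `M` on `w`. -/
noncomputable def rstSlice {A Q : Type*} (M : NBW A Q) (w : ℕ → A) : ℕ → List (Set Q)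
  | 0 => [{M.init}]
  | n + 1 => sliceSucc M.trans M.acc (w n) (rstSlice M w n)

/-- `T` is the left (accepting) child of the node `S` of slice `s` on symbol `a`. -/
def LeftChild {A Q : Type*} (δ : Q → A → Set Q) (F : Set Q) (a : A)
    (s : List (Set Q)) (S T : Set Q) : Prop :=
  ∃ tr ∈ expandTriples δ F a s ∅, tr.1 = S ∧ tr.2.1 = T ∧ T.Nonempty

/-- `T` is the right (nonaccepting) child of the node `S` of slice `s` on `a`. -/
def RightChild {A Q : Type*} (δ : Q → A → Set Q) (F : Set Q) (a : A)
    (s : List (Set Q)) (S T : Set Q) : Prop :=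
  ∃ tr ∈ expandTriples δ F a s ∅, tr.1 = S ∧ tr.2.2 = T ∧ T.Nonempty

/-- `T` is a child of `S`. -/
def Child {A Q : Type*} (δ : Q → A → Set Q) (F : Set Q) (a : A)
    (s : List (Set Q)) (S T : Set Q) : Prop :=
  LeftChild δ F a s S T ∨ RightChild δ F a s S T

section AuxRST
variable {A Q : Type*}

def succs (δ : Q → A → Set Q) (a : A) (S : Set Q) : Set Q := ⋃ q ∈ S, δ q a

def succsL (δ : Q → A → Set Q) (a : A) (l : List (Set Q)) : Set Q :=
  ⋃ S ∈ {T | T ∈ l}, succs δ a S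

lemma succsL_nil (δ : Q → A → Set Q) (a : A) : succsL δ a ([] : List (Set Q)) = ∅ := by
  simp [succsL]

lemma succsL_cons (δ : Q → A → Set Q) (a : A) (S : Set Q) (l : List (Set Q)) :
    succsL δ a (S :: l) = succs δ a S ∪ succsL δ a l := by
  ext x; simp [succsL, List.mem_cons]

lemma seen_absorb (s T F : Set Q) : (s ∪ ((T ∩ F) \ s)) ∪ ((T \ F) \ s) = s ∪ T := by
  ext x; simp; tauto

lemma expand_cons (δ : Q → A → Set Q) (F : Set Q) (a : A) (S : Set Q) (l : List (Set Q))
    (s : Set Q) :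
    expandTriples δ F a (S :: l) s =
      (S, (succs δ a S ∩ F) \ s, (succs δ a S \ F) \ s) ::
        expandTriples δ F a l (s ∪ succs δ a S) := by
  rw [expandTriples]
  rw [show ((s ∪ (((⋃ q ∈ S, δ q a) ∩ F) \ s)) ∪ (((⋃ q ∈ S, δ q a) \ F) \ s)) = s ∪ succs δ a S
    from seen_absorb s (succs δ a S) F]
  rfl

lemma expand_append (δ : Q → A → Set Q) (F : Set Q) (a : A) (l₁ l₂ : List (Set Q))
    (s : Set Q) :
    expandTriples δ F a (l₁ ++ l₂) s =
      expandTriples δ F a l₁ s ++ expandTriples δ F a l₂ (s ∪ succsL δ a l₁) := by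
  induction l₁ generalizing s with
  | nil => simp [expandTriples, succsL_nil]
  | cons S l₁ ih =>
      rw [List.cons_append, expand_cons, expand_cons, ih, succsL_cons, Set.union_assoc]
      rfl

lemma expand_mem {δ : Q → A → Set Q} {F : Set Q} {a : A} {l : List (Set Q)}
    {s : Set Q} {tr : Set Q × Set Q × Set Q} (h : tr ∈ expandTriples δ F a l s) :
    tr.1 ∈ l ∧ tr.2.1 ⊆ succs δ a tr.1 ∩ F ∧ tr.2.2 ⊆ succs δ a tr.1 \ F := by
  induction l generalizing s with
  | nil => simp [expandTriples] at h
  | cons S l ih =>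
      rw [expand_cons] at h
      rcases List.mem_cons.1 h with h | h
      · subst h
        refine ⟨List.mem_cons_self, ?_, ?_⟩
        · exact fun x hx => hx.1
        · exact fun x hx => hx.1
      · obtain ⟨h1, h2, h3⟩ := ih h
        exact ⟨List.mem_cons_of_mem _ h1, h2, h3⟩

lemma exists_seq {α : Sort*} (P : ℕ → α → Prop) (R : ℕ → α → α → Prop) (a0 : α)
    (h0 : P 0 a0) (hs : ∀ n a, P n a → ∃ a', R n a a' ∧ P (n+1) a') :
    ∃ f : ℕ → α, f 0 = a0 ∧ (∀ n, P n (f n)) ∧ ∀ n, R n (f n) (f (n+1)) := by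
  let g : ∀ n, {a : α // P n a} := fun n =>
    Nat.rec ⟨a0, h0⟩ (fun n p => ⟨(hs n p.1 p.2).choose, (hs n p.1 p.2).choose_spec.2⟩) n
  exact ⟨fun n => (g n).1, rfl, fun n => (g n).2,
    fun n => (hs n (g n).1 (g n).2).choose_spec.1⟩

def AccFrom (M : NBW A Q) (w : ℕ → A) (n : ℕ) (q : Q) : Prop :=
  ∃ ρ : ℕ → Q, ρ 0 = q ∧ (∀ i, ρ (i+1) ∈ M.trans (ρ i) (w (n+i))) ∧
    ∃ f ∈ M.acc, ∀ N, ∃ i ≥ N, ρ i = f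

lemma accFrom_pred {M : NBW A Q} {w : ℕ → A} {n : ℕ} {q q' : Q}
    (h1 : q' ∈ M.trans q (w n)) (h2 : AccFrom M w (n+1) q') : AccFrom M w n q := by
  obtain ⟨ρ, h0, htr, f, hf, hio⟩ := h2
  refine ⟨fun i => Nat.rec q (fun j _ => ρ j) i, rfl, ?_, f, hf, ?_⟩
  · intro i
    cases i with
    | zero => simpa [h0] using h1
    | succ j => simpa [show n + (j+1+1) = (n+1) + (j+1) by ring,
        show n + (j+1) = (n+1) + j by ring] using htr j
  · intro N
    obtain ⟨i, hi, hieq⟩ := hio N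
    exact ⟨i+1, le_trans hi (Nat.le_succ i), hieq⟩

lemma accFrom_run_shift {M : NBW A Q} {w : ℕ → A} {n : ℕ} {ρ : ℕ → Q}
    (htr : ∀ i, ρ (i+1) ∈ M.trans (ρ i) (w (n+i)))
    (hacc : ∃ f ∈ M.acc, ∀ N, ∃ i ≥ N, ρ i = f) (k : ℕ) :
    AccFrom M w (n+k) (ρ k) := by
  obtain ⟨f, hf, hio⟩ := hacc
  refine ⟨fun i => ρ (k+i), by simp, ?_, f, hf, ?_⟩
  · intro i
    simpa [show n+k+i = n+(k+i) by ring, show k+(i+1) = (k+i)+1 by ring] using htr (k+i)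
  · intro N
    obtain ⟨i, hi, hieq⟩ := hio (k+N)
    refine ⟨i - k, by omega, ?_⟩
    show ρ (k + (i-k)) = f
    rw [show k + (i-k) = i by omega]
    exact hieq

def ReachB (M : NBW A Q) (w : ℕ → A) (b : ℕ → Set Q) : ℕ → ℕ → Q → Prop
  | 0, _, _ => True
  | m+1, n, q => ∃ q', q' ∈ M.trans q (w n) ∧ q' ∈ b (n+1) ∧ ReachB M w b m (n+1) q'

lemma reach_trunc {M : NBW A Q} {w : ℕ → A} {b : ℕ → Set Q} {m n : ℕ} {q : Q}
    (h : ReachB M w b (m+1) n q) : ReachB M w b m n q := by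
  induction m generalizing n q with
  | zero => simp [ReachB]
  | succ m ih =>
      simp only [ReachB] at h ⊢
      obtain ⟨q', h1, h2, h3⟩ := h
      exact ⟨q', h1, h2, ih h3⟩

lemma reach_mono {M : NBW A Q} {w : ℕ → A} {b : ℕ → Set Q} {m m' n : ℕ} {q : Q}
    (h : m ≤ m') (h' : ReachB M w b m' n q) : ReachB M w b m n q := by
  obtain ⟨k, rfl⟩ := Nat.exists_eq_add_of_le h
  induction k with
  | zero => simpa using h'
  | succ k ih => exact ih (Nat.le_add_right m k) (reach_trunc h')

/-- Invariant for the greedy "leftmost accepting" branch. -/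
def RInv (M : NBW A Q) (w : ℕ → A) (n : ℕ) (S : Set Q) : Prop :=
  (∃ l₁ l₂, rstSlice M w n = l₁ ++ S :: l₂ ∧ ∀ u ∈ l₁, ∀ x ∈ u, ¬ AccFrom M w n x) ∧
  ∃ x ∈ S, AccFrom M w n x

lemma main_step (M : NBW A Q) (w : ℕ → A) (n : ℕ) (S : Set Q) (h : RInv M w n S) :
    ∃ T, (Child M.trans M.acc (w n) (rstSlice M w n) S T ∧
      (LeftChild M.trans M.acc (w n) (rstSlice M w n) S T ∨
        ∀ p ∈ S, ∀ p' ∈ M.trans p (w n), AccFrom M w (n+1) p' → p' ∈ T ∧ p' ∉ M.acc)) ∧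
    RInv M w (n+1) T := by
  obtain ⟨⟨l₁, l₂, hsl, hno⟩, q, hqS, hq⟩ := h
  set sn : Set Q := succs M.trans (w n) S with hsn_def
  set seen : Set Q := succsL M.trans (w n) l₁ with hseen_def
  set L : Set Q := (sn ∩ M.acc) \ seen with hL_def
  set R : Set Q := (sn \ M.acc) \ seen with hR_def
  have hE : expandTriples M.trans M.acc (w n) (rstSlice M w n) ∅ =
      expandTriples M.trans M.acc (w n) l₁ ∅ ++
        (S, L, R) :: expandTriples M.trans M.acc (w n) l₂ (seen ∪ sn) := by
    rw [hsl, expand_append, Set.empty_union, expand_cons]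
  have htrmem : ((S, L, R) : Set Q × Set Q × Set Q) ∈
      expandTriples M.trans M.acc (w n) (rstSlice M w n) ∅ := by
    rw [hE]; exact List.mem_append_right _ (List.mem_cons_self)
  have hseen : ∀ x : Q, AccFrom M w (n+1) x → x ∉ seen := by
    intro x hx hmem
    rw [hseen_def] at hmem
    simp only [succsL, succs, Set.mem_iUnion, Set.mem_setOf_eq] at hmem
    obtain ⟨u, hu, y, hy, hxy⟩ := hmem
    exact hno u hu y hy (accFrom_pred hxy hx)
  obtain ⟨ρ, hρ0, hρtr, hρacc⟩ := hq
  have hq1Acc : AccFrom M w (n+1) (ρ 1) := by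
    simpa using accFrom_run_shift hρtr hρacc 1
  have hq1tr : ρ 1 ∈ M.trans q (w n) := by simpa [hρ0] using hρtr 0
  have hq1sn : ρ 1 ∈ sn := Set.mem_biUnion hqS hq1tr
  have hq1seen : ρ 1 ∉ seen := hseen _ hq1Acc
  have hl1child : ∀ T' ∈ (expandTriples M.trans M.acc (w n) l₁ ∅).flatMap
      (fun tr => [tr.2.1, tr.2.2]), ∀ x ∈ T', ¬ AccFrom M w (n+1) x := by
    intro T' hT' x hx hAx
    rw [List.mem_flatMap] at hT'
    obtain ⟨tr, htr, hT'⟩ := hT'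
    obtain ⟨h1, h2, h3⟩ := expand_mem htr
    have hxs : x ∈ succs M.trans (w n) tr.1 := by
      simp only [List.mem_cons, List.not_mem_nil, or_false] at hT'
      rcases hT' with rfl | rfl
      · exact (h2 hx).1
      · exact (h3 hx).1
    simp only [succs, Set.mem_iUnion] at hxs
    obtain ⟨y, hy, hxy⟩ := hxs
    exact hno tr.1 h1 y hy (accFrom_pred hxy hAx)
  have hslice : rstSlice M w (n+1) =
      ((expandTriples M.trans M.acc (w n) l₁ ∅).flatMap (fun tr => [tr.2.1, tr.2.2])).filter
        (fun X => @decide X.Nonempty (Classical.propDecidable _)) ++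
      (L :: R :: (expandTriples M.trans M.acc (w n) l₂ (seen ∪ sn)).flatMap
        (fun tr => [tr.2.1, tr.2.2])).filter
        (fun X => @decide X.Nonempty (Classical.propDecidable _)) := by
    show sliceSucc M.trans M.acc (w n) (rstSlice M w n) = _
    rw [sliceSucc, hE, List.flatMap_append, List.flatMap_cons, List.filter_append]
    rfl
  by_cases hLA : ∃ x ∈ L, AccFrom M w (n+1) x
  · obtain ⟨x, hxL, hxA⟩ := hLA
    have hLne : L.Nonempty := ⟨x, hxL⟩
    have hleft : LeftChild M.trans M.acc (w n) (rstSlice M w n) S L :=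
      ⟨(S, L, R), htrmem, rfl, rfl, hLne⟩
    refine ⟨L, ⟨Or.inl hleft, Or.inl hleft⟩, ⟨?_, x, hxL, hxA⟩⟩
    refine ⟨((expandTriples M.trans M.acc (w n) l₁ ∅).flatMap fun tr => [tr.2.1, tr.2.2]).filter
        (fun X => @decide X.Nonempty (Classical.propDecidable _)),
      (R :: (expandTriples M.trans M.acc (w n) l₂ (seen ∪ sn)).flatMap
        fun tr => [tr.2.1, tr.2.2]).filter
        (fun X => @decide X.Nonempty (Classical.propDecidable _)), ?_, ?_⟩
    · rw [hslice, List.filter_cons, if_pos (by exact @decide_eq_true L.Nonempty (Classical.propDecidable _) hLne)]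
    · intro u hu
      exact hl1child u (List.mem_of_mem_filter hu)
  · have hacc_notseen : ∀ p' : Q, p' ∈ sn → AccFrom M w (n+1) p' → p' ∈ R ∧ p' ∉ M.acc := by
      intro p' hp'sn hA
      have hp'seen : p' ∉ seen := hseen _ hA
      have hp'F : p' ∉ M.acc := fun hc => hLA ⟨p', ⟨⟨hp'sn, hc⟩, hp'seen⟩, hA⟩
      exact ⟨⟨⟨hp'sn, hp'F⟩, hp'seen⟩, hp'F⟩
    obtain ⟨hq1R, hq1F⟩ := hacc_notseen (ρ 1) hq1sn hq1Acc
    have hRne : R.Nonempty := ⟨ρ 1, hq1R⟩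
    refine ⟨R, ⟨Or.inr ⟨(S, L, R), htrmem, rfl, rfl, hRne⟩, Or.inr ?_⟩,
      ⟨?_, ρ 1, hq1R, hq1Acc⟩⟩
    · intro p hp p' hp' hA
      exact hacc_notseen p' (Set.mem_biUnion hp hp') hA
    · by_cases hLne : L.Nonempty
      · refine ⟨(((expandTriples M.trans M.acc (w n) l₁ ∅).flatMap
            fun tr => [tr.2.1, tr.2.2]).filter
            (fun X => @decide X.Nonempty (Classical.propDecidable _))) ++ [L],
          ((expandTriples M.trans M.acc (w n) l₂ (seen ∪ sn)).flatMap
            fun tr => [tr.2.1, tr.2.2]).filter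
            (fun X => @decide X.Nonempty (Classical.propDecidable _)), ?_, ?_⟩
        · rw [hslice, List.filter_cons, if_pos (by exact @decide_eq_true L.Nonempty (Classical.propDecidable _) hLne),
            List.filter_cons, if_pos (by exact @decide_eq_true R.Nonempty (Classical.propDecidable _) hRne)]
          simp
        · intro u hu x hx hAx
          rcases List.mem_append.1 hu with hu | hu
          · exact hl1child u (List.mem_of_mem_filter hu) x hx hAx
          · rw [List.mem_singleton] at hu
            subst hu
            exact hLA ⟨x, hx, hAx⟩
      · refine ⟨((expandTriples M.trans M.acc (w n) l₁ ∅).flatMap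
            fun tr => [tr.2.1, tr.2.2]).filter
            (fun X => @decide X.Nonempty (Classical.propDecidable _)),
          ((expandTriples M.trans M.acc (w n) l₂ (seen ∪ sn)).flatMap
            fun tr => [tr.2.1, tr.2.2]).filter
            (fun X => @decide X.Nonempty (Classical.propDecidable _)), ?_, ?_⟩
        · rw [hslice, List.filter_cons, if_neg (by exact fun hc => hLne (@of_decide_eq_true L.Nonempty (Classical.propDecidable _) hc)),
            List.filter_cons, if_pos (by exact @decide_eq_true R.Nonempty (Classical.propDecidable _) hRne)]
        · intro u hu
          exact hl1child u (List.mem_of_mem_filter hu)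

end AuxRST

/-- A word is accepted by an NBW iff its reduced split tree has a left-recurring
branch. -/
theorem stmt7 {A Q : Type*} [Fintype Q] (M : NBW A Q) (w : ℕ → A) :
    w ∈ M.Lang ↔
      ∃ b : ℕ → Set Q, b 0 = {M.init} ∧
        (∀ n, Child M.trans M.acc (w n) (rstSlice M w n) (b n) (b (n + 1))) ∧
        (∀ N, ∃ n ≥ N, LeftChild M.trans M.acc (w n) (rstSlice M w n) (b n) (b (n + 1))) := by
  constructor
  · -- forward direction
    rintro ⟨ρ, ⟨h0, htr⟩, hacc⟩
    have hAcc0 : AccFrom M w 0 M.init :=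
      ⟨ρ, h0, fun i => by simpa using htr i, hacc⟩
    have hInv0 : RInv M w 0 {M.init} :=
      ⟨⟨[], [], rfl, by simp⟩, M.init, rfl, hAcc0⟩
    obtain ⟨b, hb0, hbP, hbR⟩ := exists_seq (RInv M w)
      (fun n S T => Child M.trans M.acc (w n) (rstSlice M w n) S T ∧
        (LeftChild M.trans M.acc (w n) (rstSlice M w n) S T ∨
          ∀ p ∈ S, ∀ p' ∈ M.trans p (w n), AccFrom M w (n+1) p' → p' ∈ T ∧ p' ∉ M.acc))
      {M.init} hInv0 (fun n S h => main_step M w n S h)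
    refine ⟨b, hb0, fun n => (hbR n).1, ?_⟩
    intro N
    by_contra hcon
    push_neg at hcon
    obtain ⟨_, qq, hqmem, hqA⟩ := hbP N
    obtain ⟨σ, hσ0, hσtr, hσacc⟩ := hqA
    have hmem : ∀ k, σ k ∈ b (N + k) := by
      intro k
      induction k with
      | zero => rw [hσ0]; exact hqmem
      | succ k ih =>
          rcases (hbR (N+k)).2 with hL | hP
          · exact absurd hL (hcon (N+k) (Nat.le_add_right N k))
          · exact (hP (σ k) ih (σ (k+1)) (hσtr k)
              (accFrom_run_shift hσtr hσacc (k+1))).1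
    obtain ⟨f, hf, hio⟩ := hσacc
    obtain ⟨i, hi1, hieq⟩ := hio 1
    obtain ⟨j, rfl⟩ : ∃ j, i = j + 1 := ⟨i - 1, by omega⟩
    rcases (hbR (N+j)).2 with hL | hP
    · exact absurd hL (hcon (N+j) (Nat.le_add_right N j))
    · exact (hP (σ j) (hmem j) (σ (j+1)) (hσtr j)
        (accFrom_run_shift hσtr ⟨f, hf, hio⟩ (j+1))).2 (hieq ▸ hf)
  · -- backward direction
    rintro ⟨b, hb0, hch, hlr⟩
    have hsub : ∀ n, b (n+1) ⊆ succs M.trans (w n) (b n) := by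
      intro n
      rcases hch n with h | h <;> obtain ⟨tr, htr, h1, h2, hne⟩ := h <;>
        intro x hx <;> rw [← h2] at hx
      · exact h1 ▸ ((expand_mem htr).2.1 hx).1
      · exact h1 ▸ ((expand_mem htr).2.2 hx).1
    have hne : ∀ n, (b n).Nonempty := by
      intro n
      cases n with
      | zero => rw [hb0]; exact ⟨M.init, rfl⟩
      | succ n =>
          rcases hch n with h | h <;> obtain ⟨tr, _, _, _, hne⟩ := h <;> exact hne
    have reach_exists : ∀ m n, ∃ q ∈ b n, ReachB M w b m n q := by
      intro m
      induction m with
      | zero =>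
          intro n
          obtain ⟨q, hq⟩ := hne n
          exact ⟨q, hq, trivial⟩
      | succ m ih =>
          intro n
          obtain ⟨q₁, hq₁, hr⟩ := ih (n+1)
          have hq₁' := hsub n hq₁
          simp only [succs, Set.mem_iUnion] at hq₁'
          obtain ⟨q, hq, hδ⟩ := hq₁'
          exact ⟨q, hq, q₁, hδ, hq₁, hr⟩
    have good0 : M.init ∈ b 0 ∧ ∀ m, ReachB M w b m 0 M.init := by
      refine ⟨by rw [hb0]; rfl, fun m => ?_⟩
      obtain ⟨q, hq, hr⟩ := reach_exists m 0
      rw [hb0] at hq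
      rwa [← hq]
    have hstep : ∀ n q, (q ∈ b n ∧ ∀ m, ReachB M w b m n q) →
        ∃ q', (q' ∈ M.trans q (w n)) ∧ (q' ∈ b (n+1) ∧ ∀ m, ReachB M w b m (n+1) q') := by
      intro n q hq
      by_contra hcon
      push_neg at hcon
      classical
      let g : Q → ℕ := fun q' =>
        if h : ∃ m, ¬ ReachB M w b m (n+1) q' then h.choose else 0
      have hr := hq.2 (Finset.univ.sup g + 1)
      obtain ⟨q', h1, h2, h3⟩ := hr
      have hex : ∃ m, ¬ ReachB M w b m (n+1) q' := hcon q' h1 h2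
      have hgq : ¬ ReachB M w b (g q') (n+1) q' := by
        simp only [g, dif_pos hex]
        exact hex.choose_spec
      exact hgq (reach_mono (Finset.le_sup (Finset.mem_univ q')) h3)
    obtain ⟨ρ, hρ0, hρP, hρR⟩ := exists_seq
      (fun n q => q ∈ b n ∧ ∀ m, ReachB M w b m n q)
      (fun n q q' => q' ∈ M.trans q (w n)) M.init good0 hstep
    refine ⟨ρ, ⟨hρ0, hρR⟩, ?_⟩
    by_contra hc
    simp only [NBW.Accepting, not_exists] at hc
    push_neg at hc
    classical
    let Nf : Q → ℕ := fun q => if h : ∃ N, ∀ i ≥ N, ρ i ≠ q then h.choose else 0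
    obtain ⟨n, hn, hl⟩ := hlr (Finset.univ.sup Nf)
    have hmemacc : ρ (n+1) ∈ M.acc := by
      obtain ⟨tr, htr, h1, h2, _⟩ := hl
      have := hρP (n+1)
      have hx : ρ (n+1) ∈ b (n+1) := this.1
      rw [← h2] at hx
      exact ((expand_mem htr).2.1 hx).2
    have hex : ∃ N, ∀ i ≥ N, ρ i ≠ ρ (n+1) := hc (ρ (n+1)) hmemacc
    have h2 : hex.choose ≤ Finset.univ.sup Nf := by
      have h1 : Nf (ρ (n+1)) ≤ Finset.univ.sup Nf := Finset.le_sup (Finset.mem_univ _)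
      simpa only [Nf, dif_pos hex] using h1
    have hspec := hex.choose_spec (n+1) (by omega)
    exact hspec rfl
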